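/- Let p : X̃ → X be a covering map of topological spaces that is also a homomorphism of topological groups. Then the induced morphism π₁p : π₁X̃ → π₁X is a covering morphism of group-groupoids: it is a group-groupoid morphism and for every x̃ ∈ X̃ the induced map St_{π₁X̃} x̃ → St_{π₁X} p(x̃) on stars of fundamental groupoids is a bijection. -/

import Mathlib

namespace Stmt15Aux

open unitInterval Set

variable {E X : Type*} [TopologicalSpace E] [TopologicalSpace X]

/-- Clamp a point of the unit interval into `[a, b]`. -/
def clampI (a b : I) (v : I) : I :=
  ⟨max a.1 (min v.1 b.1),
    ⟨le_max_of_le_left a.2.1, max_le a.2.2 (le_trans (min_le_left _ _) v.2.2)⟩⟩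

lemma continuous_clampI (a b : I) : Continuous (clampI a b) :=
  (continuous_const.max (continuous_subtype_val.min continuous_const)).subtype_mk _

lemma clampI_mem (a b : I) (hab : a ≤ b) (v : I) : clampI a b v ∈ Icc a b := by
  constructor
  · exact Subtype.coe_le_coe.1 (le_max_left _ _)
  · exact Subtype.coe_le_coe.1 (max_le (Subtype.coe_le_coe.2 hab) (min_le_right _ _))

lemma clampI_of_mem {a b : I} {v : I} (hv : v ∈ Icc a b) : clampI a b v = v := by
  apply Subtype.ext
  show max a.1 (min v.1 b.1) = v.1
  rw [min_eq_left (Subtype.coe_le_coe.2 hv.2), max_eq_right (Subtype.coe_le_coe.2 hv.1)]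

variable {F : Type*} [TopologicalSpace F]

lemma ext_step {p : E → X} (H : C(I × I, X)) (T : Bundle.Trivialization F p)
    {a b c d : I} (hab : a ≤ b) (hcd : c ≤ d)
    (hT : ∀ z : I × I, z.1 ∈ Icc c d → z.2 ∈ Icc a b → H z ∈ T.baseSet)
    (G : C(I × I, E))
    (hG : ∀ z : I × I, z.1 ∈ Icc c d → z.2 ≤ a → p (G z) = H z) :
    ∃ G' : C(I × I, E),
      (∀ z : I × I, z.1 ∈ Icc c d → z.2 ≤ b → p (G' z) = H z) ∧
      (∀ z : I × I, z.1 ∈ Icc c d → z.2 ≤ a → G' z = G z) := by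
  have hπmem : ∀ u : I, clampI c d u ∈ Icc c d := clampI_mem c d hcd
  have hχmem : ∀ v : I, clampI a b v ∈ Icc a b := clampI_mem a b hab
  have hsrc : ∀ u : I, G (clampI c d u, a) ∈ T.source := fun u =>
    T.mem_source.2 (by
      rw [hG (clampI c d u, a) (hπmem u) le_rfl]
      exact hT _ (hπmem u) ⟨le_rfl, hab⟩)
  have hGa : Continuous fun u : I => G (clampI c d u, a) :=
    G.continuous.comp ((continuous_clampI c d).prodMk continuous_const)
  have hTG : Continuous fun u : I => T (G (clampI c d u, a)) :=
    T.continuousOn_toFun.comp_continuous hGa hsrc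
  have hmem : ∀ z : I × I,
      (H (clampI c d z.1, clampI a b z.2), (T (G (clampI c d z.1, a))).2) ∈ T.target :=
    fun z => T.mem_target.2 (hT _ (hπmem z.1) (hχmem z.2))
  have hinner : Continuous fun z : I × I =>
      (H (clampI c d z.1, clampI a b z.2), (T (G (clampI c d z.1, a))).2) := by
    refine Continuous.prodMk ?_ ?_
    · exact H.continuous.comp
        (((continuous_clampI c d).comp continuous_fst).prodMk
          ((continuous_clampI a b).comp continuous_snd))
    · exact (hTG.comp continuous_fst).snd
  have hgcont : Continuous fun z : I × I =>
      T.toOpenPartialHomeomorph.symm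
        (H (clampI c d z.1, clampI a b z.2), (T (G (clampI c d z.1, a))).2) :=
    T.toOpenPartialHomeomorph.continuousOn_symm.comp_continuous hinner hmem
  have hmatch : ∀ z : I × I, z.2 = a →
      G (clampI c d z.1, z.2) =
        T.toOpenPartialHomeomorph.symm
          (H (clampI c d z.1, clampI a b z.2), (T (G (clampI c d z.1, a))).2) := by
    intro z hz
    have hT1 : T (G (clampI c d z.1, a)) =
        (H (clampI c d z.1, a), (T (G (clampI c d z.1, a))).2) :=
      Prod.ext (by rw [T.coe_fst (hsrc z.1), hG _ (hπmem z.1) le_rfl]) rfl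
    rw [hz, clampI_of_mem ⟨le_rfl, hab⟩, ← hT1]
    exact (T.toOpenPartialHomeomorph.left_inv (hsrc z.1)).symm
  refine ⟨⟨fun z => if (z.2 : ℝ) ≤ (a : ℝ) then G (clampI c d z.1, z.2) else
      T.toOpenPartialHomeomorph.symm
        (H (clampI c d z.1, clampI a b z.2), (T (G (clampI c d z.1, a))).2), ?_⟩, ?_, ?_⟩
  · refine Continuous.if_le
      (G.continuous.comp (((continuous_clampI c d).comp continuous_fst).prodMk continuous_snd))
      hgcont (continuous_subtype_val.comp continuous_snd) continuous_const ?_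
    exact fun z hz => hmatch z (Subtype.ext hz)
  · intro z hzc hzb
    show p (if (z.2 : ℝ) ≤ (a : ℝ) then _ else _) = H z
    by_cases h : (z.2 : ℝ) ≤ (a : ℝ)
    · rw [if_pos h, clampI_of_mem hzc]
      exact hG (z.1, z.2) hzc (Subtype.coe_le_coe.1 h)
    · rw [if_neg h]
      have hzab : z.2 ∈ Icc a b := ⟨le_of_lt (Subtype.coe_lt_coe.1 (not_le.1 h)), hzb⟩
      rw [T.proj_symm_apply (hmem z), clampI_of_mem hzc, clampI_of_mem hzab]
  · intro z hzc hza
    show (if (z.2 : ℝ) ≤ (a : ℝ) then _ else _) = G z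
    rw [if_pos (Subtype.coe_le_coe.2 hza), clampI_of_mem hzc]

/-- Lifting of continuous maps on the unit square through a covering map,
given a lift of the bottom edge which is constant. -/
theorem lift_square {p : E → X} (hp : IsCoveringMap p) (H : C(I × I, X)) (e : E)
    (he : ∀ u : I, H (u, 0) = p e) :
    ∃ G : C(I × I, E), (∀ z : I × I, p (G z) = H z) ∧ (∀ u : I, G (u, 0) = e) := by
  let H' : C(I × I, X) := H.comp ⟨Prod.swap, continuous_swap⟩
  have H_0 : ∀ a, H' (0, a) = p (ContinuousMap.const I e a) := fun a => he a
  refine ⟨(hp.liftHomotopy H' (ContinuousMap.const I e) H_0).comp ⟨Prod.swap, continuous_swap⟩,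
    fun z => ?_, fun u => ?_⟩
  · exact congrFun (hp.liftHomotopy_lifts H' _ H_0) (z.2, z.1)
  · exact hp.liftHomotopy_zero H' _ H_0 u

lemma sigma_path_eq {Y : Type*} [TopologicalSpace Y] {x y x2 y2 : Y} (hx : x = x2)
    (hy : y = y2) (γ : Path x y) (γ2 : Path x2 y2) (hfun : ∀ s : I, γ s = γ2 s) :
    (⟨x, y, ⟦γ⟧⟩ : Σ a b : Y, Path.Homotopic.Quotient a b) = ⟨x2, y2, ⟦γ2⟧⟩ := by
  subst hx; subst hy
  obtain rfl : γ = γ2 := by ext s; exact hfun s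
  rfl

lemma star_eq {Y : Type*} [TopologicalSpace Y] {x y y2 : Y} (hy : y = y2)
    (γ : Path x y) (γ2 : Path x y2) (hfun : ∀ s : I, γ s = γ2 s) :
    (⟨y, ⟦γ⟧⟩ : Σ z : Y, Path.Homotopic.Quotient x z) = ⟨y2, ⟦γ2⟧⟩ := by
  subst hy
  obtain rfl : γ = γ2 := by ext s; exact hfun s
  rfl

lemma star_inj {Y : Type*} [TopologicalSpace Y] {x y₁ y₂ : Y}
    (γ₁ : Path x y₁) (γ₂ : Path x y₂)
    (h : (⟨y₁, ⟦γ₁⟧⟩ : Σ z : Y, Path.Homotopic.Quotient x z) = ⟨y₂, ⟦γ₂⟧⟩) :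
    ∃ hy : y₁ = y₂, γ₁.Homotopic (γ₂.cast rfl hy) := by
  obtain ⟨hy, hq⟩ := Sigma.mk.inj_iff.1 h
  subst hy
  refine ⟨rfl, ?_⟩
  have hc : γ₂.cast rfl rfl = γ₂ := by ext s; rfl
  rw [hc]
  exact Quotient.exact (eq_of_heq hq)

end Stmt15Aux

/-- Pointwise sum of two paths in a topological additive group. -/
def pathAdd {X : Type} [TopologicalSpace X] [Add X] [ContinuousAdd X]
    {x y x' y' : X} (a : Path x y) (b : Path x' y') : Path (x + x') (y + y') where
  toFun t := a t + b t
  continuous_toFun := by fun_prop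
  source' := by simp
  target' := by simp

/-- Let `p : X̃ → X` be a covering map of topological spaces that is
also a homomorphism of topological (additive) groups. Then `π₁p : π₁X̃ → π₁X` is a
covering morphism of group-groupoids: it is additive on path classes (a
group-groupoid morphism) and for every `x̃` the induced map on stars
`St_{π₁X̃} x̃ → St_{π₁X} p(x̃)` is a bijection. -/
theorem stmt15 {X' X : Type} [AddGroup X'] [TopologicalSpace X'] [IsTopologicalAddGroup X']
    [AddGroup X] [TopologicalSpace X] [IsTopologicalAddGroup X]
    (p : X' →+ X) (hcont : Continuous p) (hcov : IsCoveringMap p) :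
    let pc : C(X', X) := ⟨p, hcont⟩
    let F : (Σ x y : X', Path.Homotopic.Quotient x y) →
        (Σ x y : X, Path.Homotopic.Quotient x y) :=
      fun σ => ⟨p σ.1, p σ.2.1, Path.Homotopic.Quotient.map σ.2.2 pc⟩
    -- π₁p is a morphism of group-groupoids (additivity on path classes):
    (∀ (x y x' y' : X') (a : Path x y) (b : Path x' y'),
      F ⟨x + x', y + y', ⟦pathAdd a b⟧⟩ =
        ⟨p x + p x', p y + p y', ⟦pathAdd (a.map hcont) (b.map hcont)⟧⟩) ∧
    -- π₁p is bijective on each star: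
    (∀ x' : X',
      Function.Bijective
        (fun σ : Σ y : X', Path.Homotopic.Quotient x' y =>
          (⟨p σ.1, Path.Homotopic.Quotient.map σ.2 pc⟩ : Σ y : X, Path.Homotopic.Quotient (p x') y))) := by
  intro pc F
  constructor
  · intro x y x' y' a b
    show (⟨p (x + x'), p (y + y'),
        ⟦(pathAdd a b).map pc.continuous⟧⟩ :
        Σ u v : X, Path.Homotopic.Quotient u v) = _
    exact Stmt15Aux.sigma_path_eq (map_add p x x') (map_add p y y') _ _
      (fun s => map_add p (a s) (b s))
  · intro x'
    constructor
    · -- injectivity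
      rintro ⟨y₁, q₁⟩ ⟨y₂, q₂⟩
      induction q₁ using Quotient.ind with | _ α => ?_
      induction q₂ using Quotient.ind with | _ β => ?_
      intro h
      have h' : (⟨p y₁, ⟦α.map pc.continuous⟧⟩ :
            Σ z : X, Path.Homotopic.Quotient (p x') z) = ⟨p y₂, ⟦β.map pc.continuous⟧⟩ := h
      obtain ⟨hy, hhom⟩ := Stmt15Aux.star_inj _ _ h'
      obtain ⟨Fh⟩ := hhom
      set H : C(unitInterval × unitInterval, X) := Fh.toHomotopy.toContinuousMap with hH
      have he : ∀ u : unitInterval, H (u, 0) = p x' := fun u => Fh.source u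
      obtain ⟨G, hG, hGrow⟩ := Stmt15Aux.lift_square hcov H x' he
      have hA : ∀ v : unitInterval, G (0, v) = α v := by
        have heq := hcov.eq_of_comp_eq (g₁ := fun v : unitInterval => G (0, v)) (g₂ := fun v : unitInterval => α v)
          (G.continuous.comp (Continuous.prodMk_right _)) α.continuous
          (funext fun v => by
            show p (G (0, v)) = p (α v)
            rw [hG (0, v)]
            exact Fh.apply_zero v)
          0 (by show G (0, 0) = α 0; rw [hGrow 0, α.source])
        exact fun v => congrFun heq v
      have hB : ∀ v : unitInterval, G (1, v) = β v := by
        have heq := hcov.eq_of_comp_eq (g₁ := fun v : unitInterval => G (1, v)) (g₂ := fun v : unitInterval => β v)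
          (G.continuous.comp (Continuous.prodMk_right _)) β.continuous
          (funext fun v => by
            show p (G (1, v)) = p (β v)
            rw [hG (1, v)]
            exact Fh.apply_one v)
          0 (by show G (1, 0) = β 0; rw [hGrow 1, β.source])
        exact fun v => congrFun heq v
      have hR : ∀ s s' : unitInterval, G (s, 1) = G (s', 1) := by
        intro s s'
        refine hcov.const_of_comp (g := fun s : unitInterval => G (s, 1))
          (G.continuous.comp (continuous_id.prodMk continuous_const)) ?_ s s'
        intro a a'
        show p (G (a, 1)) = p (G (a', 1))
        rw [hG (a, 1), hG (a', 1)]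
        exact (Fh.target a).trans (Fh.target a').symm
      have hyy : y₂ = y₁ := by
        rw [← β.target, ← hB 1, hR 1 0, hA 1, α.target]
      subst hyy
      apply congrArg (Sigma.mk y₂)
      apply Quotient.sound
      refine ⟨{ toFun := fun z => G z
                continuous_toFun := G.continuous
                map_zero_left := hA
                map_one_left := hB
                prop' := ?_ }⟩
      intro s v hv
      rcases (by simpa using hv : v = 0 ∨ v = 1) with rfl | rfl
      · show G (s, 0) = α 0
        rw [hGrow s, α.source]
      · show G (s, 1) = α 1
        rw [hR s 0, hA 1]
    · -- surjectivity
      rintro ⟨y, q⟩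
      induction q using Quotient.ind with | _ γ => ?_
      set H : C(unitInterval × unitInterval, X) := ⟨fun z => γ z.2, γ.continuous.comp continuous_snd⟩ with hH
      have he : ∀ u : unitInterval, H (u, 0) = p x' := fun u => γ.source
      obtain ⟨G, hG, hGrow⟩ := Stmt15Aux.lift_square hcov H x' he
      refine ⟨⟨G (0, 1), ⟦{ toFun := fun v => G (0, v)
                            continuous_toFun := G.continuous.comp (Continuous.prodMk_right _)
                            source' := hGrow 0
                            target' := rfl }⟧⟩, ?_⟩
      exact Stmt15Aux.star_eq ((hG (0, 1)).trans γ.target)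
        (Path.map _ (pc.continuous)) γ (fun v => hG (0, v))
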